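/- In the ODE flow setting, fix x₀ ∈ ℝ^d, and for a Borel probability measure ρ on ℝ^ℓ with finite second moment let ν_ρ(t) denote the pushforward of ρ under the map θ ↦ X(t; θ, x₀). Then there exist constants C₀, C₁ > 0 depending only on the Lipschitz constant C such that for all Borel probability measures μ, μ̂ on ℝ^ℓ with finite second moments and all t ∈ [0,T]: W₂(ν_μ(t), ν_μ̂(t)) ≤ (C₁ t e^{C₀ t})^{1/2} · W₂(μ, μ̂). (This is the ODE specialization of the key inequality Eq. (C.8) in the proof of Theorem 2.2: the Wasserstein-2 distance between the laws of the solutions at time t is controlled by the Wasserstein-2 distance between the parameter distributions.) -/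

import Mathlib

open MeasureTheory Set

/-- The squared Wasserstein-2 distance between two Borel measures. -/
noncomputable def W2sq {E : Type*} [MeasurableSpace E] [NormedAddCommGroup E]
    (μ ν : Measure E) : ℝ :=
  sInf {r : ℝ | ∃ π : Measure (E × E), IsProbabilityMeasure π ∧
    π.map Prod.fst = μ ∧ π.map Prod.snd = ν ∧ r = ∫ p, ‖p.1 - p.2‖ ^ 2 ∂π}

/-- The Wasserstein-2 distance. -/
noncomputable def W2 {E : Type*} [MeasurableSpace E] [NormedAddCommGroup E]
    (μ ν : Measure E) : ℝ :=
  Real.sqrt (W2sq μ ν)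

open Pointwise

/-- The Euclidean (ℓ²) norm is bounded by the ℓ¹ norm. -/
lemma euclid_norm_le_sum_abs {n : ℕ} (v : EuclideanSpace ℝ (Fin n)) : ‖v‖ ≤ ∑ i, |v i| := by
  rw [EuclideanSpace.norm_eq]
  have h1 : ∑ i, ‖v i‖ ^ 2 ≤ (∑ i, |v i|) ^ 2 := by
    rw [sq, Finset.sum_mul]
    refine Finset.sum_le_sum fun i _ => ?_
    rw [Real.norm_eq_abs, sq]
    exact mul_le_mul_of_nonneg_left
      (Finset.single_le_sum (fun j _ => abs_nonneg (v j)) (Finset.mem_univ i)) (abs_nonneg _)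
  calc Real.sqrt (∑ i, ‖v i‖ ^ 2) ≤ Real.sqrt ((∑ i, |v i|) ^ 2) := Real.sqrt_le_sqrt h1
    _ = ∑ i, |v i| := Real.sqrt_sq (Finset.sum_nonneg fun i _ => abs_nonneg _)

/-- `e^x - 1 ≤ x e^x` for `x ≥ 0`. -/
lemma exp_sub_one_le_mul_exp {x : ℝ} (hx : 0 ≤ x) : Real.exp x - 1 ≤ x * Real.exp x := by
  have h1 : 1 - x ≤ (Real.exp x)⁻¹ := by
    have := Real.add_one_le_exp (-x)
    rw [Real.exp_neg] at this
    linarith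
  have h2 : (1 - x) * Real.exp x ≤ 1 := by
    have := mul_le_mul_of_nonneg_right h1 (Real.exp_pos x).le
    rwa [inv_mul_cancel₀ (Real.exp_pos x).ne'] at this
  nlinarith [Real.exp_pos x]

/-- ODE specialization of Eq. (C.8) in the proof of Theorem 2.2:
in the ODE flow setting, for a fixed initial condition `x₀`, the `W₂`-distance between
the pushforwards of two parameter distributions `μ, μ̂` under `θ ↦ X(t; θ, x₀)` is
controlled by `(C₁ t e^{C₀ t})^{1/2} · W₂(μ, μ̂)`, with constants depending only on the
Lipschitz constant `C`. -/
theorem ode_W2_parameter_distribution_bound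
    {d l : ℕ} (C T : ℝ) (hC : 0 < C) (hT : 0 < T)
    (f : EuclideanSpace ℝ (Fin d) → ℝ → EuclideanSpace ℝ (Fin l) → EuclideanSpace ℝ (Fin d))
    (hf_cont : ContinuousOn
      (fun p : EuclideanSpace ℝ (Fin d) × ℝ × EuclideanSpace ℝ (Fin l) => f p.1 p.2.1 p.2.2)
      (univ ×ˢ Icc 0 T ×ˢ univ))
    (hLip : ∀ (x xhat : EuclideanSpace ℝ (Fin d)) (θ θhat : EuclideanSpace ℝ (Fin l)),
      ∀ t ∈ Icc (0 : ℝ) T,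
      ∑ i, |f x t θ i - f xhat t θhat i| ≤ C * (‖x - xhat‖ + ‖θ - θhat‖))
    (hM₀ : ∃ M₀ : ℝ, ∀ t ∈ Icc (0 : ℝ) T, ∑ i, |f 0 t 0 i| ≤ M₀)
    (X : ℝ → EuclideanSpace ℝ (Fin l) → EuclideanSpace ℝ (Fin d) → EuclideanSpace ℝ (Fin d))
    (hX0 : ∀ θ x₀, X 0 θ x₀ = x₀)
    (hXode : ∀ θ x₀, ∀ t ∈ Icc (0 : ℝ) T,
      HasDerivWithinAt (fun s => X s θ x₀) (f (X t θ x₀) t θ) (Icc 0 T) t)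
    (hXcont : ContinuousOn
      (fun p : ℝ × EuclideanSpace ℝ (Fin l) × EuclideanSpace ℝ (Fin d) => X p.1 p.2.1 p.2.2)
      (Icc 0 T ×ˢ univ ×ˢ univ))
    (x₀ : EuclideanSpace ℝ (Fin d)) :
    ∃ C₀ > (0 : ℝ), ∃ C₁ > (0 : ℝ),
      ∀ μ μhat : Measure (EuclideanSpace ℝ (Fin l)),
        IsProbabilityMeasure μ → IsProbabilityMeasure μhat →
        Integrable (fun θ => ‖θ‖ ^ 2) μ → Integrable (fun θ => ‖θ‖ ^ 2) μhat →
        ∀ t ∈ Icc (0 : ℝ) T,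
          W2 (μ.map fun θ => X t θ x₀) (μhat.map fun θ => X t θ x₀) ≤
            Real.sqrt (C₁ * t * Real.exp (C₀ * t)) * W2 μ μhat := by
  classical
  -- continuity of the flow curve for a fixed parameter
  have hXcurve : ∀ θ : EuclideanSpace ℝ (Fin l),
      ContinuousOn (fun s => X s θ x₀) (Icc 0 T) := by
    intro θ
    exact hXcont.comp
      ((continuous_id.prodMk (continuous_const.prodMk continuous_const)).continuousOn)
      (fun s hs => ⟨hs, trivial, trivial⟩)
  -- the key Grönwall estimate
  have key : ∀ (θ θh : EuclideanSpace ℝ (Fin l)), ∀ t ∈ Icc (0 : ℝ) T,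
      ‖X t θ x₀ - X t θh x₀‖ ≤ ‖θ - θh‖ * (Real.exp (C * t) - 1) := by
    intro θ θh
    have hcont : ContinuousOn (fun s => X s θ x₀ - X s θh x₀) (Icc 0 T) :=
      (hXcurve θ).sub (hXcurve θh)
    have hderiv : ∀ s ∈ Ico (0 : ℝ) T,
        HasDerivWithinAt (fun s => X s θ x₀ - X s θh x₀)
          (f (X s θ x₀) s θ - f (X s θh x₀) s θh) (Ici s) s := by
      intro s hs
      have h1 := (hXode θ x₀ s (Ico_subset_Icc_self hs)).sub (hXode θh x₀ s (Ico_subset_Icc_self hs))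
      exact h1.mono_of_mem_nhdsWithin (Icc_mem_nhdsGE_of_mem hs)
    have hbound : ∀ s ∈ Ico (0 : ℝ) T,
        ‖f (X s θ x₀) s θ - f (X s θh x₀) s θh‖ ≤
          C * ‖X s θ x₀ - X s θh x₀‖ + C * ‖θ - θh‖ := by
      intro s hs
      calc ‖f (X s θ x₀) s θ - f (X s θh x₀) s θh‖
          ≤ ∑ i, |(f (X s θ x₀) s θ - f (X s θh x₀) s θh) i| := euclid_norm_le_sum_abs _
        _ = ∑ i, |f (X s θ x₀) s θ i - f (X s θh x₀) s θh i| := by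
            simp [PiLp.sub_apply]
        _ ≤ C * (‖X s θ x₀ - X s θh x₀‖ + ‖θ - θh‖) :=
            hLip _ _ _ _ s (Ico_subset_Icc_self hs)
        _ = C * ‖X s θ x₀ - X s θh x₀‖ + C * ‖θ - θh‖ := by ring
    have h0 : ‖X 0 θ x₀ - X 0 θh x₀‖ ≤ 0 := by
      rw [hX0, hX0, sub_self, norm_zero]
    have h := norm_le_gronwallBound_of_norm_deriv_right_le hcont hderiv h0 hbound
    intro t ht
    have := h t ht
    rw [gronwallBound_of_K_ne_0 hC.ne'] at this
    simp only [sub_zero, zero_mul, zero_add] at this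
    rwa [show C * ‖θ - θh‖ / C * (Real.exp (C * t) - 1)
      = ‖θ - θh‖ * (Real.exp (C * t) - 1) by field_simp] at this
  -- the squared version
  have keysq : ∀ t ∈ Icc (0 : ℝ) T, ∀ (θ θh : EuclideanSpace ℝ (Fin l)),
      ‖X t θ x₀ - X t θh x₀‖ ^ 2 ≤
        C ^ 2 * T * t * Real.exp (2 * C * t) * ‖θ - θh‖ ^ 2 := by
    intro t ht θ θh
    have hk := key θ θh t ht
    have ht0 : 0 ≤ t := ht.1
    have hE1 : 1 ≤ Real.exp (C * t) := Real.one_le_exp (by positivity)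
    have hB : (0 : ℝ) ≤ ‖θ - θh‖ := norm_nonneg _
    have s1 : ‖X t θ x₀ - X t θh x₀‖ ^ 2 ≤ (‖θ - θh‖ * (Real.exp (C * t) - 1)) ^ 2 :=
      pow_le_pow_left₀ (norm_nonneg _) hk 2
    have s3 : Real.exp (C * t) - 1 ≤ (C * t) * Real.exp (C * t) :=
      exp_sub_one_le_mul_exp (by positivity)
    have s4 : (Real.exp (C * t) - 1) ^ 2 ≤ ((C * t) * Real.exp (C * t)) ^ 2 :=
      pow_le_pow_left₀ (by linarith) s3 2
    have hE2 : Real.exp (2 * C * t) = Real.exp (C * t) * Real.exp (C * t) := by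
      rw [← Real.exp_add]; ring_nf
    have s5 : ((C * t) * Real.exp (C * t)) ^ 2 ≤ C ^ 2 * T * t * Real.exp (2 * C * t) := by
      rw [hE2]
      have htT : t * t ≤ T * t := mul_le_mul_of_nonneg_right ht.2 ht0
      have hfac : C ^ 2 * (Real.exp (C * t) * Real.exp (C * t)) * (t * t) ≤
          C ^ 2 * (Real.exp (C * t) * Real.exp (C * t)) * (T * t) :=
        mul_le_mul_of_nonneg_left htT (by positivity)
      nlinarith [hfac]
    calc ‖X t θ x₀ - X t θh x₀‖ ^ 2
        ≤ (‖θ - θh‖ * (Real.exp (C * t) - 1)) ^ 2 := s1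
      _ = ‖θ - θh‖ ^ 2 * (Real.exp (C * t) - 1) ^ 2 := by ring
      _ ≤ ‖θ - θh‖ ^ 2 * (C ^ 2 * T * t * Real.exp (2 * C * t)) := by
          have := le_trans s4 s5
          exact mul_le_mul_of_nonneg_left this (by positivity)
      _ = C ^ 2 * T * t * Real.exp (2 * C * t) * ‖θ - θh‖ ^ 2 := by ring
  refine ⟨2 * C, by linarith, C ^ 2 * T, by positivity, ?_⟩
  intro μ μh hμ hμh hIμ hIμh t ht
  have ht0 : 0 ≤ t := ht.1
  set g : EuclideanSpace ℝ (Fin l) → EuclideanSpace ℝ (Fin d) := fun θ => X t θ x₀ with hg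
  have hgc : Continuous g := by
    refine hXcont.comp_continuous
      (continuous_const.prodMk (continuous_id.prodMk continuous_const)) (fun θ => ⟨ht, trivial, trivial⟩)
  have hgm : Measurable g := hgc.measurable
  set Kt : ℝ := C ^ 2 * T * t * Real.exp (2 * C * t) with hKt
  have hKt0 : 0 ≤ Kt :=
    mul_nonneg (mul_nonneg (by positivity) ht0) (Real.exp_pos _).le
  -- the coupling set of (μ, μh)
  set S : Set ℝ := {r : ℝ | ∃ π : Measure (EuclideanSpace ℝ (Fin l) × EuclideanSpace ℝ (Fin l)),
    IsProbabilityMeasure π ∧ π.map Prod.fst = μ ∧ π.map Prod.snd = μh ∧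
    r = ∫ p, ‖p.1 - p.2‖ ^ 2 ∂π} with hS
  have hSne : S.Nonempty := by
    refine ⟨∫ p, ‖p.1 - p.2‖ ^ 2 ∂(μ.prod μh), μ.prod μh, inferInstance, ?_, ?_, rfl⟩
    · simp [Measure.map_fst_prod, measure_univ]
    · simp [Measure.map_snd_prod, measure_univ]
  -- lower bound for coupling sets
  have hbdd : ∀ (ν ν' : Measure (EuclideanSpace ℝ (Fin d))),
      BddBelow {r : ℝ | ∃ π : Measure (EuclideanSpace ℝ (Fin d) × EuclideanSpace ℝ (Fin d)),
        IsProbabilityMeasure π ∧ π.map Prod.fst = ν ∧ π.map Prod.snd = ν' ∧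
        r = ∫ p, ‖p.1 - p.2‖ ^ 2 ∂π} := by
    intro ν ν'
    refine ⟨0, fun r hr => ?_⟩
    obtain ⟨π, _, _, _, rfl⟩ := hr
    exact integral_nonneg fun p => by positivity
  -- key claim: every coupling value bounds the image W2sq
  have hkey : ∀ r ∈ S, W2sq (μ.map g) (μh.map g) ≤ Kt * r := by
    rintro r ⟨π, hπp, hπ1, hπ2, rfl⟩
    set φ : (EuclideanSpace ℝ (Fin l) × EuclideanSpace ℝ (Fin l)) →
        (EuclideanSpace ℝ (Fin d) × EuclideanSpace ℝ (Fin d)) := fun p => (g p.1, g p.2) with hφ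
    have hφm : Measurable φ := (hgm.comp measurable_fst).prodMk (hgm.comp measurable_snd)
    -- integrability of the cost under π
    have hc1 : Integrable (fun p : EuclideanSpace ℝ (Fin l) × EuclideanSpace ℝ (Fin l) =>
        ‖p.1‖ ^ 2) π := by
      have h := hIμ
      rw [← hπ1] at h
      exact (integrable_map_measure
        (continuous_norm.pow 2 |>.comp continuous_id).aestronglyMeasurable
        measurable_fst.aemeasurable).mp h
    have hc2 : Integrable (fun p : EuclideanSpace ℝ (Fin l) × EuclideanSpace ℝ (Fin l) =>
        ‖p.2‖ ^ 2) π := by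
      have h := hIμh
      rw [← hπ2] at h
      exact (integrable_map_measure
        (continuous_norm.pow 2 |>.comp continuous_id).aestronglyMeasurable
        measurable_snd.aemeasurable).mp h
    have hcost : Integrable (fun p : EuclideanSpace ℝ (Fin l) × EuclideanSpace ℝ (Fin l) =>
        ‖p.1 - p.2‖ ^ 2) π := by
      refine Integrable.mono' (((hc1.add hc2).const_mul 2))
        (((continuous_fst.sub continuous_snd).norm.pow 2).aestronglyMeasurable)
        (Filter.Eventually.of_forall fun p => ?_)
      have h0 := norm_sub_le p.1 p.2
      have h2 : ‖p.1 - p.2‖ ^ 2 ≤ (‖p.1‖ + ‖p.2‖) ^ 2 :=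
        pow_le_pow_left₀ (norm_nonneg _) h0 2
      rw [Real.norm_eq_abs, abs_of_nonneg (by positivity)]
      simp only [Pi.add_apply]
      nlinarith [sq_nonneg (‖p.1‖ - ‖p.2‖), h2]
    -- integrability and bound for the image cost
    have hptw : ∀ p : EuclideanSpace ℝ (Fin l) × EuclideanSpace ℝ (Fin l),
        ‖g p.1 - g p.2‖ ^ 2 ≤ Kt * ‖p.1 - p.2‖ ^ 2 := by
      intro p
      simpa [hg, hKt] using keysq t ht p.1 p.2
    have hXcost : Integrable (fun p : EuclideanSpace ℝ (Fin l) × EuclideanSpace ℝ (Fin l) =>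
        ‖g p.1 - g p.2‖ ^ 2) π := by
      refine Integrable.mono' (hcost.const_mul Kt)
        ((((hgc.comp continuous_fst).sub (hgc.comp continuous_snd)).norm.pow 2).aestronglyMeasurable)
        (Filter.Eventually.of_forall fun p => ?_)
      rw [Real.norm_eq_abs, abs_of_nonneg (by positivity)]
      exact hptw p
    -- the image coupling
    have hmem : (∫ p, ‖p.1 - p.2‖ ^ 2 ∂(π.map φ)) ∈
        {r : ℝ | ∃ π' : Measure (EuclideanSpace ℝ (Fin d) × EuclideanSpace ℝ (Fin d)),
          IsProbabilityMeasure π' ∧ π'.map Prod.fst = μ.map g ∧ π'.map Prod.snd = μh.map g ∧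
          r = ∫ p, ‖p.1 - p.2‖ ^ 2 ∂π'} := by
      refine ⟨π.map φ, Measure.isProbabilityMeasure_map hφm.aemeasurable, ?_, ?_, rfl⟩
      · rw [Measure.map_map measurable_fst hφm]
        have : (Prod.fst ∘ φ) = g ∘ Prod.fst := rfl
        rw [this, ← Measure.map_map hgm measurable_fst, hπ1]
      · rw [Measure.map_map measurable_snd hφm]
        have : (Prod.snd ∘ φ) = g ∘ Prod.snd := rfl
        rw [this, ← Measure.map_map hgm measurable_snd, hπ2]
    have hval : (∫ p, ‖p.1 - p.2‖ ^ 2 ∂(π.map φ)) =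
        ∫ p, ‖g p.1 - g p.2‖ ^ 2 ∂π := by
      rw [integral_map (f := fun p : EuclideanSpace ℝ (Fin d) × EuclideanSpace ℝ (Fin d) => ‖p.1 - p.2‖ ^ 2) hφm.aemeasurable
        (((continuous_fst.sub continuous_snd).norm.pow 2).aestronglyMeasurable)]
    have hle : (∫ p, ‖g p.1 - g p.2‖ ^ 2 ∂π) ≤ Kt * ∫ p, ‖p.1 - p.2‖ ^ 2 ∂π := by
      calc (∫ p, ‖g p.1 - g p.2‖ ^ 2 ∂π) ≤ ∫ p, Kt * ‖p.1 - p.2‖ ^ 2 ∂π :=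
            integral_mono hXcost (hcost.const_mul Kt) hptw
        _ = Kt * ∫ p, ‖p.1 - p.2‖ ^ 2 ∂π := integral_const_mul Kt _
    calc W2sq (μ.map g) (μh.map g) ≤ ∫ p, ‖p.1 - p.2‖ ^ 2 ∂(π.map φ) :=
          csInf_le (hbdd _ _) hmem
      _ = ∫ p, ‖g p.1 - g p.2‖ ^ 2 ∂π := hval
      _ ≤ Kt * ∫ p, ‖p.1 - p.2‖ ^ 2 ∂π := hle
  -- conclude on the level of W2sq
  have hW2sq : W2sq (μ.map g) (μh.map g) ≤ Kt * W2sq μ μh := by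
    have h1 : W2sq (μ.map g) (μh.map g) ≤ sInf (Kt • S) := by
      refine le_csInf (hSne.smul_set) ?_
      rintro b ⟨r, hr, rfl⟩
      simpa [smul_eq_mul] using hkey r hr
    rw [Real.sInf_smul_of_nonneg hKt0, smul_eq_mul] at h1
    exact h1
  have hfinal : W2 (μ.map g) (μh.map g) ≤ Real.sqrt Kt * W2 μ μh := by
    unfold W2
    calc Real.sqrt (W2sq (μ.map g) (μh.map g)) ≤ Real.sqrt (Kt * W2sq μ μh) :=
          Real.sqrt_le_sqrt hW2sq
      _ = Real.sqrt Kt * Real.sqrt (W2sq μ μh) := Real.sqrt_mul hKt0 _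
  exact hfinal
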